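/- Fix integers n ≥ 2, N ≥ 1 and κ ≥ 1, maps f : ℝ^(2n−1) × ℝ → ℝ and ĉ : ℝ × ℝ^(2n−1) → ℝ, a dataset of triples (y_i⁺, ζ_i, u_i) ∈ ℝ × ℝ^(2n−1) × ℝ, i = 1,…,N, and δ > 0. Suppose a sequence of sets (A^j)_{j≥0} in ℝ^(2n−1) satisfies A⁰ ⊆ S_δ, A^{j+1} ⊆ R⁻(A^j) for all j ≥ 0, and A⁰ ⊆ A¹. Then for every ζ₀ ∈ A^κ there exists a sequence of indices i : {1,2,3,…} → {1,…,N} such that the closed-loop trajectory defined by ζ_t := Φ(ζ_{t−1}, y_{i(t)}⁺) for t ≥ 1 satisfies |(ζ_t)ₙ| ≤ δ for all t ≥ κ. -/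

import Mathlib

/-- The closed-loop one-step map with reference `yr`:
`Φ(ζ, yr) = (y₂,…,yₙ, f(ζ, ĉ(yr, ζ)), u₂,…,u_{n−1}, ĉ(yr, ζ))` for the augmented
state `ζ = (y₁,…,yₙ,u₁,…,u_{n−1}) ∈ ℝ^(2n−1)` (0-indexed coordinates). -/
noncomputable def Phi (n : ℕ) (f : EuclideanSpace ℝ (Fin (2*n-1)) → ℝ → ℝ)
    (chat : ℝ → EuclideanSpace ℝ (Fin (2*n-1)) → ℝ)
    (ζ : EuclideanSpace ℝ (Fin (2*n-1))) (yr : ℝ) : EuclideanSpace ℝ (Fin (2*n-1)) :=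
  WithLp.toLp 2 fun (k : Fin (2*n-1)) =>
    if (k : ℕ) = n - 1 then f ζ (chat yr ζ)
    else if h : (k : ℕ) = 2*n - 2 then chat yr ζ
    else ζ ⟨(k : ℕ) + 1, by have := k.isLt; omega⟩

/-- For a data triple `(y_i⁺, ζ_i, u_i)`, the shifted successor state
`ζ_i⁺ = (y_{i,2},…,y_{i,n}, y_i⁺, u_{i,2},…,u_{i,n−1}, u_i)`. -/
noncomputable def zplus (n : ℕ) (yp : ℝ) (ζ : EuclideanSpace ℝ (Fin (2*n-1))) (ui : ℝ) :
    EuclideanSpace ℝ (Fin (2*n-1)) :=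
  WithLp.toLp 2 fun (k : Fin (2*n-1)) =>
    if (k : ℕ) = n - 1 then yp
    else if h : (k : ℕ) = 2*n - 2 then ui
    else ζ ⟨(k : ℕ) + 1, by have := k.isLt; omega⟩

/-- Backward reachable set `R⁻(A) = {ζ : ∃ i, Φ(ζ, y_i⁺) ∈ A}`. -/
def Rminus (n N : ℕ) (f : EuclideanSpace ℝ (Fin (2*n-1)) → ℝ → ℝ)
    (chat : ℝ → EuclideanSpace ℝ (Fin (2*n-1)) → ℝ) (yd : Fin N → ℝ)
    (A : Set (EuclideanSpace ℝ (Fin (2*n-1)))) : Set (EuclideanSpace ℝ (Fin (2*n-1))) :=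
  {ζ | ∃ i : Fin N, Phi n f chat ζ (yd i) ∈ A}

/-- `S_δ = {ζ : |ζₙ| ≤ δ}` (the n-th coordinate is index `n-1`, 0-indexed). -/
def Sdelta (n : ℕ) (hn : 1 ≤ n) (δ : ℝ) : Set (EuclideanSpace ℝ (Fin (2*n-1))) :=
  {ζ | |ζ ⟨n - 1, by omega⟩| ≤ δ}

/-- Lemma 3: if additionally `A⁰ ⊆ A¹`, then from any `ζ₀ ∈ A^κ`
there is an infinite sequence of reference indices whose closed-loop trajectory
satisfies `|(ζ_t)ₙ| ≤ δ` for all `t ≥ κ` (practical output regulation). -/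
theorem stmt_6 (n N κ : ℕ) (hn : 2 ≤ n) (hN : 1 ≤ N) (hκ : 1 ≤ κ)
    (f : EuclideanSpace ℝ (Fin (2*n-1)) → ℝ → ℝ)
    (chat : ℝ → EuclideanSpace ℝ (Fin (2*n-1)) → ℝ)
    (yd : Fin N → ℝ) (ζd : Fin N → EuclideanSpace ℝ (Fin (2*n-1))) (ud : Fin N → ℝ)
    (δ : ℝ) (hδ : 0 < δ)
    (A : ℕ → Set (EuclideanSpace ℝ (Fin (2*n-1))))
    (hA0 : A 0 ⊆ Sdelta n (by omega) δ)
    (hAsucc : ∀ j : ℕ, A (j+1) ⊆ Rminus n N f chat yd (A j))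
    (hA01 : A 0 ⊆ A 1) :
    ∀ ζ0 ∈ A κ, ∃ (idx : ℕ → Fin N) (traj : ℕ → EuclideanSpace ℝ (Fin (2*n-1))),
      traj 0 = ζ0 ∧
      (∀ t : ℕ, traj (t+1) = Phi n f chat (traj t) (yd (idx (t+1)))) ∧
      (∀ t : ℕ, κ ≤ t → |traj t ⟨n - 1, by omega⟩| ≤ δ) := by
  intro ζ0 hζ0
  have key : ∀ (m : ℕ) (ζ : EuclideanSpace ℝ (Fin (2*n-1))), ζ ∈ A m →
      ∃ i : Fin N, Phi n f chat ζ (yd i) ∈ A (m - 1) := by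
    intro m ζ h
    match m with
    | 0 => exact hAsucc 0 (hA01 h)
    | j+1 => simpa [Rminus] using hAsucc j h
  let P : (t : ℕ) → {ζ : EuclideanSpace ℝ (Fin (2*n-1)) // ζ ∈ A (κ - t)} :=
    fun t => Nat.rec ⟨ζ0, by simpa using hζ0⟩
      (fun t p => ⟨Phi n f chat p.1 (yd (key (κ - t) p.1 p.2).choose),
        by
          have := (key (κ - t) p.1 p.2).choose_spec
          simpa [Nat.sub_sub] using this⟩) t
  refine ⟨fun t => (key (κ - (t-1)) (P (t-1)).1 (P (t-1)).2).choose,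
    fun t => (P t).1, rfl, fun t => rfl, ?_⟩
  intro t ht
  have h0 : κ - t = 0 := Nat.sub_eq_zero_of_le ht
  have hm : (P t).1 ∈ A 0 := h0 ▸ (P t).2
  exact hA0 hm
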